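/- Let S/R be a Frobenius extension with _R S_R centrally projective over R, ω a Wakamatsu tilting R-module, T = End_R(ω). If ω has finite projective dimension as a right T-module, then ω ⊗_T Hom_R(ω, S ⊗_R ω) ≅ S ⊗_R ω as left R-modules. -/

import Mathlib

open CategoryTheory

noncomputable section

/-- `Ext^n_A(M, N) = 0`, via Mathlib's `Ext` for the `ℤ`-linear abelian
category of left `A`-modules. -/
def ExtVanish (A : Type) [Ring A] (n : ℕ) (M N : Type) [AddCommGroup M] [Module A M]
    [AddCommGroup N] [Module A N] : Prop :=
  Subsingleton (((Ext ℤ (ModuleCat.{0} A) n).obj (Opposite.op (ModuleCat.of A M))).obj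
    (ModuleCat.of A N))

/-- `X` belongs to `add ω`: `X` is a direct summand of a finite direct sum of
copies of `ω`. -/
def MemAdd (A : Type) [Ring A] (ω : Type) [AddCommGroup ω] [Module A ω]
    (X : Type) [AddCommGroup X] [Module A X] : Prop :=
  ∃ (n : ℕ) (i : X →ₗ[A] (Fin n → ω)) (p : (Fin n → ω) →ₗ[A] X), ∀ x, p (i x) = x

/-- `f : M → X` is a left `add ω`-approximation of `M`: every map from `M` to a module
in `add ω` factors through `f`. -/
def IsLeftApprox (A : Type) [Ring A] (ω : Type) [AddCommGroup ω] [Module A ω]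
    {M X : Type} [AddCommGroup M] [Module A M] [AddCommGroup X] [Module A X]
    (f : M →ₗ[A] X) : Prop :=
  ∀ (Z : Type) [AddCommGroup Z] [Module A Z], MemAdd A ω Z →
    ∀ g : M →ₗ[A] Z, ∃ h : X →ₗ[A] Z, h.comp f = g

/-- There is an exact sequence `0 → M → ω₁ → ⋯ → ωₙ` with each `ωᵢ ∈ add ω` and each
`Im fᵢ ↪ ωᵢ` a left `add ω`-approximation.  Applied to `M = A` this says
`fadim_A ω ≥ n`; by Huang's theorem, applied to a module `M` it says exactly that
`M` is `ω`-`n`-torsionfree. -/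
def ApproxChain (A : Type) [Ring A] (ω : Type) [AddCommGroup ω] [Module A ω] :
    ℕ → ModuleCat.{0} A → Prop
  | 0, _ => True
  | n + 1, M =>
    ∃ (X : ModuleCat.{0} A) (f : M →ₗ[A] X), MemAdd A ω X ∧ Function.Injective f ∧
      IsLeftApprox A ω f ∧ ApproxChain A ω n (ModuleCat.of A (X ⧸ LinearMap.range f))

/-- `ω` is a Wakamatsu tilting `A`-module: finitely generated, self-orthogonal
(`Ext^i_A(ω, ω) = 0` for all `i ≥ 1`) and of infinite faithful dimension. -/
def IsWakamatsuTilting (A : Type) [Ring A] (ω : Type) [AddCommGroup ω] [Module A ω] :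
    Prop :=
  Module.Finite A ω ∧ (∀ i, 1 ≤ i → ExtVanish A i ω ω) ∧
    ∀ n, ApproxChain A ω n (ModuleCat.of A A)

/-- A ring extension `l : R → S` is a Frobenius extension; this is encoded by the
classical equivalent data of a Frobenius system: an `R`-`R`-bimodule map `E : S → R`
together with dual bases `x₁,…,xₘ, y₁,…,yₘ ∈ S`.  This is equivalent to: `_R S` is
finitely generated projective and `_S S_R ≅ Hom_R(_R S_S, _R R_R)` as `S`-`R`-bimodules. -/
def IsFrobeniusExtension {R S : Type} [Ring R] [Ring S] (l : R →+* S) : Prop :=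
  ∃ (E : S →+ R) (m : ℕ) (x y : Fin m → S),
    (∀ r s, E (l r * s) = r * E s) ∧ (∀ s r, E (s * l r) = E s * r) ∧
    (∀ s, (∑ i, x i * l (E (y i * s))) = s) ∧
    (∀ s, (∑ i, l (E (s * x i)) * y i) = s)

/-- The `R`-`R`-bimodule `S` (via `l`) is centrally projective over `R`, i.e. `_R S_R`
is a direct summand of a finite direct sum of copies of the regular bimodule `_R R_R`. -/
def IsCentrallyProjective {R S : Type} [Ring R] [Ring S] (l : R →+* S) : Prop :=
  ∃ (n : ℕ) (i : S →+ (Fin n → R)) (p : (Fin n → R) →+ S),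
    (∀ r s, i (l r * s) = fun j => r * i s j) ∧
    (∀ s r, i (s * l r) = fun j => i s j * r) ∧
    (∀ r v, p (fun j => r * v j) = l r * p v) ∧
    (∀ v r, p (fun j => v j * r) = p v * l r) ∧
    (∀ s, p (i s) = s)

/-- `(W, t)` realizes the induced module `S ⊗_R M` of the `R`-module `M` along
`l : R → S`: `t s m = s ⊗ m` is additive in each variable, `R`-balanced and
`S`-equivariant, and satisfies the universal property among `S`-modules. -/
def IsInducedTensor {R S : Type} [Ring R] [Ring S] (l : R →+* S)
    (M : Type) [AddCommGroup M] [Module R M]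
    (W : Type) [AddCommGroup W] [Module S W] (t : S →+ M →+ W) : Prop :=
  (∀ s r m, t (s * l r) m = t s (r • m)) ∧
  (∀ s' s m, t (s' * s) m = s' • t s m) ∧
  (∀ (V : Type) [AddCommGroup V] [Module S V] (b : S →+ M →+ V),
    (∀ s r m, b (s * l r) m = b s (r • m)) → (∀ s' s m, b (s' * s) m = s' • b s m) →
    ∃! h : W →ₗ[S] V, ∀ s m, h (t s m) = b s m)

/-- There is a projective resolution `0 → P_n → ⋯ → P_0 → M → 0` of length `n`,
i.e. the projective dimension of `M` is at most `n`. -/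
def ProjDimLe (A : Type) [Ring A] : ℕ → ModuleCat.{0} A → Prop
  | 0, M => Module.Projective A M
  | n + 1, M =>
    ∃ (P : ModuleCat.{0} A) (f : P →ₗ[A] M), Module.Projective A P ∧
      Function.Surjective f ∧ ProjDimLe A n (ModuleCat.of A (LinearMap.ker f))

/-- Let `S/R` be a Frobenius extension with `_R S_R` centrally
projective over `R`, `ω` a Wakamatsu tilting `R`-module, `T = End_R(ω)`.  If `ω` has
finite projective dimension as a right `T`-module, then
`ω ⊗_T Hom_R(ω, S ⊗_R ω) ≅ S ⊗_R ω` as left `R`-modules (via the canonical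
evaluation map `x ⊗ g ↦ g x`).

Here `(W, t)` realizes `S ⊗_R ω` and `(Q, τ)` realizes the balanced tensor product
`ω ⊗_T Hom_R(ω, W)` over `T`: `τ` is additive in each variable, `T`-balanced
(`τ (f x) g = τ x (g ∘ f)`, the right `T`-action on `ω` being `x · f = f x` and the
left `T`-action on `Hom_R(ω, W)` being precomposition), compatible with the left
`R`-action on `ω`, and universal among such pairings into left `R`-modules.  Right
`T`-modules are identified with left `Module.End R ω`-modules, so finiteness of
`pd(ω_T)` is expressed for `ω` with the application action of `Module.End R ω`. -/
theorem inducedTensor_hom_tensor_iso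
    (R S : Type) [Ring R] [Ring S] [IsNoetherianRing R] [IsNoetherianRing Rᵐᵒᵖ]
    [IsNoetherianRing S] [IsNoetherianRing Sᵐᵒᵖ] (l : R →+* S)
    (hFrob : IsFrobeniusExtension l) (hCP : IsCentrallyProjective l)
    (ω : Type) [AddCommGroup ω] [Module R ω] (hω : IsWakamatsuTilting R ω)
    (hpd : ∃ n, ProjDimLe (Module.End R ω) n (ModuleCat.of (Module.End R ω) ω))
    (W : Type) [AddCommGroup W] [Module S W] (t : S →+ ω →+ W)
    (hW : IsInducedTensor l ω W t) :
    letI : Module R W := Module.compHom W l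
    ∀ (Q : Type) [AddCommGroup Q] [Module R Q] (τ : ω →+ (ω →ₗ[R] W) →+ Q),
      (∀ (f : Module.End R ω) (x : ω) (g : ω →ₗ[R] W), τ (f x) g = τ x (g.comp f)) →
      (∀ (r : R) (x : ω) (g : ω →ₗ[R] W), τ (r • x) g = r • τ x g) →
      (∀ (V : Type) [AddCommGroup V] [Module R V] (b : ω →+ (ω →ₗ[R] W) →+ V),
        (∀ (f : Module.End R ω) (x : ω) (g : ω →ₗ[R] W), b (f x) g = b x (g.comp f)) →
        (∀ (r : R) (x : ω) (g : ω →ₗ[R] W), b (r • x) g = r • b x g) →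
        ∃! h : Q →ₗ[R] V, ∀ x g, h (τ x g) = b x g) →
      ∃ e : Q ≃ₗ[R] W, ∀ (x : ω) (g : ω →ₗ[R] W), e (τ x g) = g x := by
  classical
  obtain ⟨n, i, p, hi1, hi2, hp1, hp2, hpi⟩ := hCP
  obtain ⟨ht1, ht2, htUP⟩ := hW
  intro Q instAGQ instMQ τ hτbal hτR hτUP
  letI instRW : Module R W := Module.compHom W l
  have hsmul : ∀ (r : R) (w : W), r • w = l r • w := fun _ _ => rfl
  -- W is additively generated by the elements `t s m`
  set G : AddSubgroup W := AddSubgroup.closure {w | ∃ s m, t s m = w} with hGdef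
  have hGsmul : ∀ (s' : S) (w : W), w ∈ G → s' • w ∈ G := by
    intro s' w hw
    induction hw using AddSubgroup.closure_induction with
    | mem w hw =>
      obtain ⟨s, m, rfl⟩ := hw
      exact AddSubgroup.subset_closure ⟨s' * s, m, (ht2 s' s m)⟩
    | zero => rw [smul_zero]; exact G.zero_mem
    | add a b _ _ ha hb => rw [smul_add]; exact G.add_mem ha hb
    | neg a _ ha => rw [smul_neg]; exact G.neg_mem ha
  have hNtop : ∀ w : W, w ∈ G := by
    let N : Submodule S W :=
      { carrier := G
        add_mem' := fun h h' => G.add_mem h h'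
        zero_mem' := G.zero_mem
        smul_mem' := fun s' w hw => hGsmul s' w hw }
    obtain ⟨h, hh, huniq⟩ := htUP (W ⧸ N) 0 (by intro s r m; simp) (by intro s' s m; simp)
    have h1 : N.mkQ = h := huniq N.mkQ (fun s m => by
      show N.mkQ (t s m) = 0
      rw [Submodule.mkQ_apply, Submodule.Quotient.mk_eq_zero]
      exact AddSubgroup.subset_closure ⟨s, m, rfl⟩)
    have h2 : (0 : W →ₗ[S] W ⧸ N) = h := huniq 0 (fun s m => rfl)
    intro w
    have : N.mkQ w = 0 := by rw [h1, ← h2]; rfl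
    rwa [Submodule.mkQ_apply, Submodule.Quotient.mk_eq_zero] at this
  -- the dual-basis elements
  set δ : Fin n → (Fin n → R) := fun j => Pi.single j 1 with hδdef
  set u : Fin n → S := fun j => p (δ j) with hudef
  have hδcomm : ∀ (r : R) (j : Fin n), (fun j' => r * δ j j') = fun j' => δ j j' * r := by
    intro r j; funext j'
    by_cases hj : j' = j <;> simp [hδdef, Pi.single_apply, hj]
  have hucomm : ∀ (r : R) (j : Fin n), u j * l r = l r * u j := by
    intro r j
    rw [hudef]
    rw [← hp2, ← hp1, hδcomm]
  have hδsingle : ∀ (c : R) (j : Fin n), (fun j' => δ j j' * c) = Pi.single j c := by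
    intro c j; funext j'
    by_cases hj : j' = j <;> simp [hδdef, Pi.single_apply, hj]
  -- the projection ω^n → W
  let π : (Fin n → ω) →ₗ[R] W :=
    { toFun := fun v => ∑ j, t (u j) (v j)
      map_add' := fun v v' => by
        simp only [Pi.add_apply, map_add]
        rw [Finset.sum_add_distrib]
      map_smul' := fun r v => by
        show (∑ j, t (u j) ((r • v) j)) = r • ∑ j, t (u j) (v j)
        rw [hsmul, Finset.smul_sum]
        refine Finset.sum_congr rfl fun j _ => ?_
        rw [Pi.smul_apply, ← ht1, hucomm, ht2] }
  -- the S-module of additive maps S →+ ω^n, with (s • f) s' = f (s' * s)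
  letI instSMulV : SMul S (S →+ (Fin n → ω)) := ⟨fun s f => f.comp (AddMonoidHom.mulRight s)⟩
  have hVsmul : ∀ (s : S) (f : S →+ (Fin n → ω)) (s' : S), (s • f) s' = f (s' * s) :=
    fun _ _ _ => rfl
  letI instModV : Module S (S →+ (Fin n → ω)) :=
    { smul := fun s f => f.comp (AddMonoidHom.mulRight s)
      one_smul := fun f => AddMonoidHom.ext fun s' => by
        show f (s' * 1) = f s'
        rw [mul_one]
      mul_smul := fun s₁ s₂ f => AddMonoidHom.ext fun s' => by
        show f (s' * (s₁ * s₂)) = f (s' * s₁ * s₂)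
        rw [mul_assoc]
      smul_add := fun s f g => AddMonoidHom.ext fun s' => rfl
      smul_zero := fun s => AddMonoidHom.ext fun s' => rfl
      add_smul := fun s₁ s₂ f => AddMonoidHom.ext fun s' => by
        show f (s' * (s₁ + s₂)) = f (s' * s₁) + f (s' * s₂)
        rw [mul_add, map_add]
      zero_smul := fun f => AddMonoidHom.ext fun s' => by
        show f (s' * 0) = 0
        rw [mul_zero, map_zero] }
  -- the pairing b s m = (s' ↦ (i (s' * s) j • m)_j)
  let b : S →+ ω →+ (S →+ (Fin n → ω)) :=
    AddMonoidHom.mk'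
      (fun s => AddMonoidHom.mk'
        (fun m => AddMonoidHom.mk' (fun s' => fun j => i (s' * s) j • m)
          (fun s₁ s₂ => by
            funext j
            show i ((s₁ + s₂) * s) j • m = i (s₁ * s) j • m + i (s₂ * s) j • m
            rw [add_mul, map_add, Pi.add_apply, add_smul]))
        (fun m m' => AddMonoidHom.ext fun s' => by
          funext j
          show i (s' * s) j • (m + m') = i (s' * s) j • m + i (s' * s) j • m'
          rw [smul_add]))
      (fun s₁ s₂ => AddMonoidHom.ext fun m => AddMonoidHom.ext fun s' => by
        funext j
        show i (s' * (s₁ + s₂)) j • m = i (s' * s₁) j • m + i (s' * s₂) j • m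
        rw [mul_add, map_add, Pi.add_apply, add_smul])
  have hb1 : ∀ s r m, b (s * l r) m = b s (r • m) := by
    intro s r m
    refine AddMonoidHom.ext fun s' => funext fun j => ?_
    show i (s' * (s * l r)) j • m = i (s' * s) j • (r • m)
    rw [← mul_assoc, hi2, ← mul_smul]
  have hb2 : ∀ s'' s m, b (s'' * s) m = s'' • b s m := by
    intro s'' s m
    refine AddMonoidHom.ext fun s' => funext fun j => ?_
    show i (s' * (s'' * s)) j • m = i (s' * s'' * s) j • m
    rw [mul_assoc]
  obtain ⟨h, hh, -⟩ := htUP (S →+ (Fin n → ω)) b hb1 hb2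
  -- the inclusion ι : W → ω^n
  let ι0 : W → (Fin n → ω) := fun w => h w 1
  have hι_t : ∀ s m, ι0 (t s m) = fun j => i s j • m := by
    intro s m
    show h (t s m) 1 = _
    rw [hh]
    funext j
    show i (1 * s) j • m = i s j • m
    rw [one_mul]
  have hι_add : ∀ w w', ι0 (w + w') = ι0 w + ι0 w' := fun w w' => by
    show h (w + w') 1 = _
    rw [map_add]; rfl
  have hι_smul : ∀ (r : R) (w : W), ι0 (r • w) = r • ι0 w := by
    intro r w
    induction hNtop w using AddSubgroup.closure_induction with
    | mem w hw =>
      obtain ⟨s, m, rfl⟩ := hw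
      rw [hsmul, ← ht2, hι_t, hι_t]
      funext j
      show i (l r * s) j • m = r • (i s j • m)
      rw [hi1, mul_smul]
    | zero =>
      have hz : ι0 (0 : W) = 0 := by
        show h (0 : W) 1 = (0 : Fin n → ω)
        rw [map_zero]; rfl
      rw [smul_zero, hz, smul_zero]
    | add a c _ _ ha hc =>
      rw [smul_add, hι_add, hι_add, ha, hc, smul_add]
    | neg a _ ha =>
      have hn : ∀ w : W, ι0 (-w) = -ι0 w := fun w => by
        show h (-w) 1 = -(h w 1)
        rw [map_neg]; rfl
      rw [smul_neg, hn, hn, ha, smul_neg]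
  let ι : W →ₗ[R] (Fin n → ω) :=
    { toFun := ι0, map_add' := hι_add, map_smul' := hι_smul }
  -- π ∘ ι = id
  have hπι : ∀ w, π (ι w) = w := by
    intro w
    induction hNtop w using AddSubgroup.closure_induction with
    | mem w hw =>
      obtain ⟨s, m, rfl⟩ := hw
      show π (ι0 (t s m)) = t s m
      rw [hι_t]
      have key : ∀ j : Fin n, t (u j) (i s j • m) = (t.flip m) (p (Pi.single j (i s j))) := by
        intro j
        have harg : u j * l (i s j) = p (Pi.single j (i s j)) := by
          show p (δ j) * l (i s j) = p (Pi.single j (i s j))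
          rw [← hp2, hδsingle]
        show t (u j) (i s j • m) = t (p (Pi.single j (i s j))) m
        rw [← ht1, harg]
      show (∑ j, t (u j) ((fun j => i s j • m) j)) = t s m
      calc (∑ j, t (u j) (i s j • m)) = ∑ j, (t.flip m) (p (Pi.single j (i s j))) :=
            Finset.sum_congr rfl fun j _ => key j
        _ = (t.flip m) (p (∑ j, Pi.single j (i s j))) := by
            rw [map_sum, map_sum]
        _ = t s m := by rw [Finset.univ_sum_single, hpi]; rfl
    | zero => rw [map_zero, map_zero]
    | add a c _ _ ha hc => rw [map_add, map_add, ha, hc]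
    | neg a _ ha => rw [map_neg, map_neg, ha]
  -- the maps g_j : ω → W
  let gj : Fin n → (ω →ₗ[R] W) := fun j => π.comp (LinearMap.single R (fun _ => ω) j)
  have hgj : ∀ (j : Fin n) (x : ω), gj j x = π (Pi.single j x) := fun j x => rfl
  -- β : W → Q, the inverse of the evaluation
  let β : W →ₗ[R] Q :=
    { toFun := fun w => ∑ j, τ (ι w j) (gj j)
      map_add' := fun w w' => by
        simp only [map_add, Pi.add_apply, AddMonoidHom.add_apply]
        rw [Finset.sum_add_distrib]
      map_smul' := fun r w => by
        show (∑ j, τ ((ι (r • w)) j) (gj j)) = r • ∑ j, τ ((ι w) j) (gj j)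
        rw [ι.map_smul, Finset.smul_sum]
        exact Finset.sum_congr rfl fun j _ => by rw [Pi.smul_apply, hτR] }
  have hβ_apply : ∀ w, β w = ∑ j, τ (ι w j) (gj j) := fun w => rfl
  -- the evaluation pairing
  let bev : ω →+ (ω →ₗ[R] W) →+ W :=
    AddMonoidHom.mk'
      (fun x => AddMonoidHom.mk' (fun g => g x) (fun g g' => rfl))
      (fun x x' => by ext g; exact g.map_add x x')
  have hev1 : ∀ (f : Module.End R ω) (x : ω) (g : ω →ₗ[R] W), bev (f x) g = bev x (g.comp f) :=
    fun f x g => rfl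
  have hev2 : ∀ (r : R) (x : ω) (g : ω →ₗ[R] W), bev (r • x) g = r • bev x g :=
    fun r x g => g.map_smul r x
  obtain ⟨e, he, -⟩ := hτUP W bev hev1 hev2
  -- e ∘ β = id
  have heβ : ∀ w, e (β w) = w := by
    intro w
    rw [hβ_apply, map_sum]
    have step : ∀ j : Fin n, e (τ (ι w j) (gj j)) = π (Pi.single j (ι w j)) := by
      intro j
      rw [he]
      rfl
    rw [Finset.sum_congr rfl fun j _ => step j, ← map_sum π, Finset.univ_sum_single]
    exact hπι w
  -- β ∘ e = id, via the key identity and uniqueness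
  have hkey : ∀ (x : ω) (g : ω →ₗ[R] W), β (g x) = τ x g := by
    intro x g
    rw [hβ_apply]
    have step : ∀ j : Fin n,
        τ (ι (g x) j) (gj j) = τ x ((gj j).comp ((LinearMap.proj j).comp (ι.comp g))) := by
      intro j
      exact hτbal ((LinearMap.proj j).comp (ι.comp g)) x (gj j)
    rw [Finset.sum_congr rfl fun j _ => step j, ← map_sum (τ x)]
    congr 1
    ext y
    rw [LinearMap.sum_apply]
    have : ∀ j : Fin n,
        ((gj j).comp ((LinearMap.proj j).comp (ι.comp g))) y = π (Pi.single j (ι (g y) j)) :=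
      fun j => rfl
    rw [Finset.sum_congr rfl fun j _ => this j, ← map_sum π, Finset.univ_sum_single]
    exact hπι (g y)
  have hβe : ∀ q, β (e q) = q := by
    obtain ⟨h₀, hh₀, huniq⟩ := hτUP Q τ hτbal hτR
    have h1 : β.comp e = h₀ := huniq (β.comp e) (fun x g => by
      show β (e (τ x g)) = τ x g
      rw [he]
      exact hkey x g)
    have h2 : (LinearMap.id : Q →ₗ[R] Q) = h₀ := huniq LinearMap.id (fun x g => rfl)
    intro q
    have := congrArg (fun f : Q →ₗ[R] Q => f q) (h1.trans h2.symm)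
    exact this
  have hbij : Function.Bijective e :=
    ⟨Function.LeftInverse.injective hβe, Function.RightInverse.surjective heβ⟩
  refine ⟨LinearEquiv.ofBijective e hbij, fun x g => ?_⟩
  show e (τ x g) = g x
  exact he x g

end
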